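/- Let X be a finite totally ordered alphabet and let T ⊆ X⁺ be a non-empty subsemigroup of X⁺ which is a rational language recognized by a deterministic finite automaton with m states. Let v₁, v₂, … be the enumeration of T in shortlex order, and define w₁ = v₁ and w_{n+1} = (w_n v_{n+1} w_n)^{(n+1)!} for n ≥ 1. Let φ : X⁺ → S be a homomorphism to a finite semigroup S with |S| = k, and set r = m(k+1) − 1 and N = |X| + |X|² + ⋯ + |X|^r. Then φ(w_n) = φ(w_N) for all n ≥ N, and φ(w_N) is an idempotent belonging to the minimal ideal of the subsemigroup φ(T) of S. -/

import Mathlib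

/-- The `n`-th power (concatenation) of a word. -/
def wordPow {X : Type*} (n : ℕ) (u : List X) : List X := (List.replicate n u).flatten

/-- The shortlex (strict) order on words: first by length, then lexicographically. -/
def ShortlexLT {X : Type*} [LinearOrder X] (u v : List X) : Prop :=
  u.length < v.length ∨ (u.length = v.length ∧ List.Lex (· < ·) u v)

/-- `I` is a (two-sided) ideal of the subsemigroup `U` of `S`. -/
def IsIdealOf {S : Type*} [Semigroup S] (U I : Set S) : Prop :=
  I.Nonempty ∧ I ⊆ U ∧ ∀ a ∈ I, ∀ s ∈ U, s * a ∈ I ∧ a * s ∈ I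

namespace ZiminAux

lemma wordPow_one {X : Type*} (u : List X) : wordPow 1 u = u := by
  simp [wordPow]

lemma wordPow_succ {X : Type*} (c : ℕ) (u : List X) :
    wordPow (c + 1) u = u ++ wordPow c u := by
  simp [wordPow, List.replicate_succ]

lemma shortlex_irrefl {X : Type*} [LinearOrder X] (u : List X) : ¬ ShortlexLT u u := by
  rintro (h | ⟨-, h⟩)
  · exact lt_irrefl _ h
  · exact absurd h (irrefl_of _ _)

lemma shortlex_length_le {X : Type*} [LinearOrder X] {u v : List X}
    (h : ShortlexLT u v) : u.length ≤ v.length := by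
  rcases h with h | ⟨h, -⟩
  · exact h.le
  · exact h.le

section Semi

variable {S : Type*} [Semigroup S]

lemma coe_pow_idem {e : S} (he : e * e = e) :
    ∀ m, 1 ≤ m → ((e : WithOne S)) ^ m = (e : WithOne S) := by
  intro m hm
  induction m, hm using Nat.le_induction with
  | base => rw [pow_one]
  | succ c hc ih => rw [pow_succ, ih, ← WithOne.coe_mul, he]

lemma coe_pow_mem (P : Set S) (hP : ∀ a ∈ P, ∀ b ∈ P, a * b ∈ P) {x : S} (hx : x ∈ P) :
    ∀ m, 1 ≤ m → ∃ z ∈ P, ((x : WithOne S)) ^ m = (z : WithOne S) := by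
  intro m hm
  induction m, hm using Nat.le_induction with
  | base => exact ⟨x, hx, by rw [pow_one]⟩
  | succ c hc ih =>
    obtain ⟨z, hz, hzeq⟩ := ih
    exact ⟨z * x, hP z hz x hx, by rw [pow_succ, hzeq, WithOne.coe_mul]⟩

lemma pow_period {M : Type*} [Monoid M] {y : M} {i p : ℕ} (h : y ^ i = y ^ (i + p)) :
    ∀ c a, i ≤ a → y ^ (a + c * p) = y ^ a := by
  have h1 : ∀ a, i ≤ a → y ^ (a + p) = y ^ a := by
    intro a ha
    obtain ⟨t, rfl⟩ := Nat.exists_eq_add_of_le ha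
    have : i + t + p = (i + p) + t := by ring
    rw [this, pow_add, ← h, ← pow_add]
  intro c
  induction c with
  | zero => intro a _; simp
  | succ c ih =>
    intro a ha
    have : a + (c + 1) * p = (a + c * p) + p := by ring
    rw [this, h1 _ (le_trans ha (Nat.le_add_right _ _)), ih a ha]

lemma exists_pow_collision [Fintype S] (x : S) :
    ∃ i j : ℕ, 1 ≤ i ∧ i < j ∧ j ≤ Fintype.card S + 1 ∧
      ((x : WithOne S)) ^ i = ((x : WithOne S)) ^ j := by
  classical
  have hmaps : ∀ a ∈ Finset.Icc 1 (Fintype.card S + 1),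
      ((x : WithOne S)) ^ a ∈ (Finset.univ : Finset S).image (fun z : S => (z : WithOne S)) := by
    intro a ha
    rw [Finset.mem_Icc] at ha
    obtain ⟨z, _, hz⟩ := coe_pow_mem (Set.univ) (fun _ _ _ _ => trivial) (Set.mem_univ x) a ha.1
    exact Finset.mem_image.mpr ⟨z, Finset.mem_univ _, hz.symm⟩
  have hcard : ((Finset.univ : Finset S).image (fun z : S => (z : WithOne S))).card
      < (Finset.Icc 1 (Fintype.card S + 1)).card := by
    rw [Finset.card_image_of_injective _ (fun a b hab => WithOne.coe_inj.mp hab),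
      Finset.card_univ, Nat.card_Icc]
    omega
  obtain ⟨a, ha, b, hb, hne, heq⟩ :=
    Finset.exists_ne_map_eq_of_card_lt_of_maps_to hcard hmaps
  rw [Finset.mem_Icc] at ha hb
  rcases lt_or_gt_of_ne hne with h | h
  · exact ⟨a, b, ha.1, h, hb.2, heq⟩
  · exact ⟨b, a, hb.1, h, ha.2, heq.symm⟩

lemma exists_minimal_ideal [Fintype S] {U : Set S} (hne : U.Nonempty)
    (hmul : ∀ a ∈ U, ∀ b ∈ U, a * b ∈ U) :
    ∃ K, IsIdealOf U K ∧ ∀ I', IsIdealOf U I' → K ⊆ I' := by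
  classical
  have hUideal : IsIdealOf U U :=
    ⟨hne, subset_rfl, fun a ha s hs => ⟨hmul s hs a ha, hmul a ha s hs⟩⟩
  set A : Set ℕ := {n | ∃ I, IsIdealOf U I ∧ I.ncard = n} with hA
  have hAne : A.Nonempty := ⟨U.ncard, U, hUideal, rfl⟩
  obtain ⟨K, hK, hKcard⟩ : ∃ I, IsIdealOf U I ∧ I.ncard = sInf A := Nat.sInf_mem hAne
  refine ⟨K, hK, ?_⟩
  intro I' hI'
  -- the intersection is an ideal
  have hint : IsIdealOf U (K ∩ I') := by
    refine ⟨?_, fun z hz => hK.2.1 hz.1, fun a ha s hs => ?_⟩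
    · obtain ⟨a, ha⟩ := hK.1
      obtain ⟨b, hb⟩ := hI'.1
      refine ⟨a * b, (hK.2.2 a ha b (hI'.2.1 hb)).2, (hI'.2.2 b hb a (hK.2.1 ha)).1⟩
    · exact ⟨⟨(hK.2.2 a ha.1 s hs).1, (hI'.2.2 a ha.2 s hs).1⟩,
        ⟨(hK.2.2 a ha.1 s hs).2, (hI'.2.2 a ha.2 s hs).2⟩⟩
  have hle : sInf A ≤ (K ∩ I').ncard := Nat.sInf_le ⟨K ∩ I', hint, rfl⟩
  have : K ∩ I' = K :=
    Set.eq_of_subset_of_ncard_le Set.inter_subset_left (by omega) (Set.toFinite K)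
  intro z hz
  rw [← this] at hz
  exact hz.2

lemma mem_sandwich {U K : Set S} (hK : IsIdealOf U K)
    (hmin : ∀ I', IsIdealOf U I' → K ⊆ I')
    {x : S} (hx : x ∈ K) {e : S} (he : e ∈ K) : ∃ a ∈ K, ∃ b ∈ K, a * x * b = e := by
  set I' : Set S := {z | ∃ a ∈ K, ∃ b ∈ K, a * x * b = z} with hI'
  have hIK : I' ⊆ K := by
    rintro z ⟨a, ha, b, hb, rfl⟩
    exact (hK.2.2 (a * x) (hK.2.2 x hx a (hK.2.1 ha)).1 b (hK.2.1 hb)).2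
  have hideal : IsIdealOf U I' := by
    refine ⟨⟨x * x * x, x, hx, x, hx, rfl⟩, fun z hz => hK.2.1 (hIK hz), ?_⟩
    rintro z ⟨a, ha, b, hb, rfl⟩ s hs
    constructor
    · exact ⟨s * a, (hK.2.2 a ha s hs).1, b, hb, by simp only [mul_assoc]⟩
    · exact ⟨a, ha, b * s, (hK.2.2 b hb s hs).2, by simp only [mul_assoc]⟩
  exact hmin I' hideal he

lemma flip_inv [Fintype S] {G : Set S} {e : S}
    (hid : ∀ g ∈ G, e * g = g ∧ g * e = g)
    (hmulG : ∀ a ∈ G, ∀ b ∈ G, a * b ∈ G) (heG : e ∈ G)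
    {s t : S} (hs : s ∈ G) (ht : t ∈ G) (hst : s * t = e) : t * s = e := by
  classical
  have hmaps : Set.MapsTo (fun z => s * z) G G := fun z hz => hmulG s hs z hz
  have hsurj : Set.SurjOn (fun z => s * z) G G := by
    intro z hz
    refine ⟨t * z, hmulG t ht z hz, ?_⟩
    simp only
    rw [← mul_assoc, hst, (hid z hz).1]
  have hinj : Set.InjOn (fun z => s * z) G :=
    (((Set.toFinite G).surjOn_iff_bijOn_of_mapsTo hmaps).mp hsurj).injOn
  have h1 : s * (t * s) = s * e := by
    rw [← mul_assoc, hst, (hid s hs).1, (hid s hs).2]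
  exact hinj (hmulG t ht s hs) heG h1

end Semi

section Lists

variable {X : Type*} [Fintype X] [DecidableEq X]

/-- The finset of all lists of length `n`. -/
def listsLen (X : Type*) [Fintype X] [DecidableEq X] : ℕ → Finset (List X)
  | 0 => {([] : List X)}
  | (n + 1) => (Finset.univ ×ˢ listsLen X n).image fun p => p.1 :: p.2

lemma mem_listsLen (n : ℕ) (l : List X) : l ∈ listsLen X n ↔ l.length = n := by
  induction n generalizing l with
  | zero => simp [listsLen, List.length_eq_zero_iff]
  | succ n ih =>
    simp only [listsLen, Finset.mem_image, Finset.mem_product, Finset.mem_univ, true_and]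
    constructor
    · rintro ⟨⟨a, tl⟩, htl, rfl⟩
      simp [ih tl |>.mp htl]
    · intro hl
      cases l with
      | nil => simp at hl
      | cons a tl =>
        exact ⟨⟨a, tl⟩, (ih tl).mpr (by simpa using hl), rfl⟩

lemma card_listsLen (n : ℕ) : (listsLen X n).card = Fintype.card X ^ n := by
  induction n with
  | zero => simp [listsLen]
  | succ n ih =>
    rw [listsLen, Finset.card_image_of_injective _
      (fun p q hpq => by
        obtain ⟨h1, h2⟩ := List.cons.injEq p.1 p.2 q.1 q.2 ▸ hpq
        exact Prod.ext h1 h2),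
      Finset.card_product, Finset.card_univ, ih]
    ring

end Lists

end ZiminAux

theorem zimin_idempotent_in_minimal_ideal {X : Type*} [Fintype X] [LinearOrder X]
    (T : Set (List X)) (hTne : T.Nonempty) (hTsub : ∀ u ∈ T, ∀ v ∈ T, u ++ v ∈ T)
    (hTpos : ∀ t ∈ T, t ≠ [])
    {σ : Type*} [Fintype σ] (M : DFA X σ) (hrec : M.accepts = T)
    (v : ℕ → List X) (hvmem : ∀ i : ℕ, 1 ≤ i → v i ∈ T)
    (hvsurj : ∀ t ∈ T, ∃ i : ℕ, 1 ≤ i ∧ v i = t)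
    (hvmono : ∀ i j : ℕ, 1 ≤ i → i < j → ShortlexLT (v i) (v j))
    (w : ℕ → List X) (hw1 : w 1 = v 1)
    (hwsucc : ∀ n : ℕ, 1 ≤ n →
      w (n + 1) = wordPow (Nat.factorial (n + 1)) (w n ++ v (n + 1) ++ w n))
    {S : Type*} [Semigroup S] [Fintype S] (φ : List X → S)
    (hφ : ∀ u v' : List X, u ≠ [] → v' ≠ [] → φ (u ++ v') = φ u * φ v')
    (N : ℕ)
    (hN : N = ∑ i ∈ Finset.Icc 1 (Fintype.card σ * (Fintype.card S + 1) - 1),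
      (Fintype.card X) ^ i) :
    (∀ n : ℕ, N ≤ n → φ (w n) = φ (w N)) ∧ IsIdempotentElem (φ (w N)) ∧
    ∃ I : Set S, IsIdealOf (φ '' T) I ∧ (∀ I' : Set S, IsIdealOf (φ '' T) I' → I ⊆ I') ∧
      φ (w N) ∈ I := by
  classical
  obtain ⟨t₀, ht₀⟩ := hTne
  have hm : 1 ≤ Fintype.card σ := @Fintype.card_pos σ _ ⟨M.start⟩
  have hkS : 1 ≤ Fintype.card S := @Fintype.card_pos S _ ⟨φ t₀⟩
  have hXpos : 1 ≤ Fintype.card X := by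
    rcases ht₀' : t₀ with _ | ⟨a, tl⟩
    · exact absurd ht₀' (hTpos t₀ ht₀)
    · exact @Fintype.card_pos X _ ⟨a⟩
  set k := Fintype.card S with hkdef
  set r := Fintype.card σ * (k + 1) - 1 with hrdef
  have hkr : k ≤ r := by
    have h := Nat.le_mul_of_pos_left (k + 1) hm
    omega
  have hrN : r ≤ N := by
    have h1 : ∑ _i ∈ Finset.Icc 1 r, 1 ≤ ∑ i ∈ Finset.Icc 1 r, Fintype.card X ^ i :=
      Finset.sum_le_sum (fun i _ => Nat.one_le_pow _ _ hXpos)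
    rw [Finset.sum_const, smul_eq_mul, Nat.card_Icc, ← hN] at h1
    omega
  have hkN : k ≤ N := le_trans hkr hrN
  set U : Set S := φ '' T with hUdef
  have hTU : ∀ t ∈ T, φ t ∈ U := fun t ht => ⟨t, ht, rfl⟩
  have hUmul : ∀ a ∈ U, ∀ b ∈ U, a * b ∈ U := by
    rintro a ⟨u, hu, rfl⟩ b ⟨u', hu', rfl⟩
    rw [← hφ u u' (hTpos u hu) (hTpos u' hu')]
    exact hTU _ (hTsub u hu u' hu')
  have hUne : U.Nonempty := ⟨φ t₀, hTU t₀ ht₀⟩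
  obtain ⟨K, hK, hKmin⟩ := ZiminAux.exists_minimal_ideal hUne hUmul
  have hKU : K ⊆ U := hK.2.1
  have hKabs := hK.2.2
  -- pumping down to a short word whose image lies in K
  have pump : ∀ L (t : List X), t.length ≤ L → t ∈ T → φ t ∈ K →
      ∃ t', t' ∈ T ∧ φ t' ∈ K ∧ t'.length ≤ r := by
    intro L
    induction L with
    | zero =>
      intro t hle ht _
      exact absurd (List.length_eq_zero_iff.mp (Nat.le_zero.mp hle)) (hTpos t ht)
    | succ L ih =>
      intro t hle ht hφt
      by_cases hsmall : t.length ≤ r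
      · exact ⟨t, ht, hφt, hsmall⟩
      · push_neg at hsmall
        have hmm : k + 1 ≤ Fintype.card σ * (k + 1) := Nat.le_mul_of_pos_left (k + 1) hm
        have hlen : Fintype.card σ * (k + 1) ≤ t.length := by omega
        have key : ∀ j j', 1 ≤ j → j < j' → j' ≤ Fintype.card σ * (k + 1) →
            M.evalFrom M.start (t.take j) = M.evalFrom M.start (t.take j') →
            φ (t.take j) = φ (t.take j') →
            ∃ t', t' ∈ T ∧ φ t' ∈ K ∧ t'.length ≤ r := by
          intro j j' hj1 hjj hj'le hstate hphi
          have hj'len : j' ≤ t.length := le_trans hj'le hlen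
          set t' := t.take j ++ t.drop j' with ht'def
          have hlt : t'.length < t.length := by
            rw [ht'def, List.length_append, List.length_take, List.length_drop]
            omega
          have ht'T : t' ∈ T := by
            have hacc : t ∈ M.accepts := by rw [hrec]; exact ht
            rw [← hrec]
            rw [DFA.mem_accepts] at hacc; show M.eval t' ∈ M.accept
            have heval : M.eval t' = M.eval t := by
              show M.evalFrom M.start (t.take j ++ t.drop j')
                  = M.evalFrom M.start t
              conv_rhs => rw [← List.take_append_drop j' t]
              rw [DFA.evalFrom_of_append, DFA.evalFrom_of_append, hstate]
            rw [heval]; exact hacc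
          have hφt' : φ t' = φ t := by
            by_cases hnil : t.drop j' = []
            · have hj'ge : t.length ≤ j' := List.drop_eq_nil_iff.mp hnil
              have htk : t.take j' = t := List.take_of_length_le hj'ge
              rw [ht'def, hnil, List.append_nil, hphi, htk]
            · have htake : t.take j ≠ [] := by
                have hlj : (t.take j).length = j := by
                  rw [List.length_take]; omega
                intro hcon; rw [hcon] at hlj; simp at hlj; omega
              have htake' : t.take j' ≠ [] := by
                have hlj : (t.take j').length = j' := by
                  rw [List.length_take]; omega
                intro hcon; rw [hcon] at hlj; simp at hlj; omega
              rw [ht'def, hφ _ _ htake hnil, hphi, ← hφ _ _ htake' hnil,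
                List.take_append_drop]
          refine ih t' (by omega) ht'T ?_
          rw [hφt']; exact hφt
        obtain ⟨a, hai, b, hbi, hne, heqab⟩ :=
          Finset.exists_ne_map_eq_of_card_lt_of_maps_to
            (s := Finset.Icc 1 (Fintype.card σ * (k + 1)))
            (t := (Finset.univ : Finset (σ × S)))
            (f := fun j => (M.evalFrom M.start (t.take j), φ (t.take j)))
            (by
              rw [Finset.card_univ, Nat.card_Icc, Fintype.card_prod, ← hkdef]
              have := mul_lt_mul_of_pos_left (show k < k + 1 by omega) hm
              omega)
            (fun x _ => Finset.mem_univ _)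
        rw [Finset.mem_Icc] at hai hbi
        rcases lt_or_gt_of_ne hne with h | h
        · exact key a b hai.1 h hbi.2 (congrArg Prod.fst heqab) (congrArg Prod.snd heqab)
        · exact key b a hbi.1 h hai.2 (congrArg Prod.fst heqab).symm
            (congrArg Prod.snd heqab).symm
  obtain ⟨x₀, hx₀K⟩ := hK.1
  obtain ⟨t₁, ht₁T, ht₁φ⟩ := hKU hx₀K
  obtain ⟨tK, htKT, htKK, htKr⟩ := pump t₁.length t₁ le_rfl ht₁T (by rw [ht₁φ]; exact hx₀K)
  -- the short word appears in the enumeration with small index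
  obtain ⟨i, hi1, hvi⟩ := hvsurj tK htKT
  have hvK : φ (v i) ∈ K := by rw [hvi]; exact htKK
  have hiN : i ≤ N := by
    by_contra hcon
    push_neg at hcon
    have hmaps : ∀ j ∈ Finset.Icc 1 i, v j ∈ (Finset.Icc 1 r).biUnion (ZiminAux.listsLen X) := by
      intro j hj
      rw [Finset.mem_Icc] at hj
      have hjT : v j ∈ T := hvmem j hj.1
      have hlen1 : 1 ≤ (v j).length := List.length_pos_iff.mpr (hTpos _ hjT)
      have hlenr : (v j).length ≤ r := by
        rcases eq_or_lt_of_le hj.2 with heq | hlt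
        · rw [heq, hvi]; exact htKr
        · have hsl := ZiminAux.shortlex_length_le (hvmono j i hj.1 hlt)
          rw [hvi] at hsl
          omega
      exact Finset.mem_biUnion.mpr ⟨(v j).length, Finset.mem_Icc.mpr ⟨hlen1, hlenr⟩,
        (ZiminAux.mem_listsLen _ _).mpr rfl⟩
    have hinj : Set.InjOn v (Finset.Icc 1 i) := by
      intro a ha b hb hab
      simp only [Finset.coe_Icc, Set.mem_Icc] at ha hb
      by_contra hne
      rcases lt_or_gt_of_ne hne with h | h
      · exact ZiminAux.shortlex_irrefl _ (hab ▸ hvmono a b ha.1 h)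
      · exact ZiminAux.shortlex_irrefl _ (hab ▸ hvmono b a hb.1 h)
    have hcard := Finset.card_le_card_of_injOn v hmaps hinj
    have hcardF : ((Finset.Icc 1 r).biUnion (ZiminAux.listsLen X)).card = N := by
      rw [Finset.card_biUnion, hN]
      · exact Finset.sum_congr rfl (fun ℓ _ => ZiminAux.card_listsLen ℓ)
      · intro a _ b _ hab
        rw [Function.onFun, Finset.disjoint_left]
        intro l hla hlb
        rw [ZiminAux.mem_listsLen] at hla hlb
        exact hab (by omega)
    rw [Nat.card_Icc, hcardF] at hcard
    omega
  -- basic facts about the words w n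
  have hwpT : ∀ c, 1 ≤ c → ∀ u ∈ T, wordPow c u ∈ T := by
    intro c hc
    induction c, hc using Nat.le_induction with
    | base => intro u hu; rw [ZiminAux.wordPow_one]; exact hu
    | succ c hc ih => intro u hu; rw [ZiminAux.wordPow_succ]; exact hTsub u hu _ (ih u hu)
  have hwT : ∀ n, 1 ≤ n → w n ∈ T := by
    intro n hn
    induction n, hn using Nat.le_induction with
    | base => rw [hw1]; exact hvmem 1 le_rfl
    | succ n hn ih =>
      rw [hwsucc n hn]
      exact hwpT _ (Nat.factorial_pos _) _
        (hTsub _ (hTsub _ ih _ (hvmem _ (by omega))) _ ih)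
  have hwne : ∀ n, 1 ≤ n → w n ≠ [] := fun n hn => hTpos _ (hwT n hn)
  have hφpow : ∀ u ∈ T, ∀ c, 1 ≤ c →
      ((φ (wordPow c u) : S) : WithOne S) = ((φ u : S) : WithOne S) ^ c := by
    intro u hu c hc
    induction c, hc using Nat.le_induction with
    | base => rw [ZiminAux.wordPow_one, pow_one]
    | succ c hc ih =>
      rw [ZiminAux.wordPow_succ, hφ u _ (hTpos u hu) (hTpos _ (hwpT c hc u hu)),
        WithOne.coe_mul, ih, pow_succ']
  have htriple : ∀ n, 1 ≤ n →
      φ (w n ++ v (n + 1) ++ w n) = φ (w n) * φ (v (n + 1)) * φ (w n) := by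
    intro n hn
    have h1 : w n ++ v (n + 1) ≠ [] := fun h => hwne n hn (List.append_eq_nil_iff.mp h).1
    rw [hφ _ _ h1 (hwne n hn), hφ _ _ (hwne n hn) (hTpos _ (hvmem _ (by omega)))]
  have htripleT : ∀ n, 1 ≤ n → w n ++ v (n + 1) ++ w n ∈ T := fun n hn =>
    hTsub _ (hTsub _ (hwT n hn) _ (hvmem _ (by omega))) _ (hwT n hn)
  have hstep : ∀ n, 1 ≤ n → ((φ (w (n + 1)) : S) : WithOne S)
      = ((φ (w n) * φ (v (n + 1)) * φ (w n) : S) : WithOne S) ^ (Nat.factorial (n + 1)) := by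
    intro n hn
    rw [hwsucc n hn, hφpow _ (htripleT n hn) _ (Nat.factorial_pos _), htriple n hn]
  -- membership of φ (w n) in K for n ≥ i
  have hKpow : ∀ u ∈ T, φ u ∈ K → ∀ c, 1 ≤ c → φ (wordPow c u) ∈ K := by
    intro u hu hk' c hc
    induction c, hc using Nat.le_induction with
    | base => rw [ZiminAux.wordPow_one]; exact hk'
    | succ c hc ih =>
      rw [ZiminAux.wordPow_succ, hφ u _ (hTpos u hu) (hTpos _ (hwpT c hc u hu))]
      exact (hKabs _ hk' _ (hTU _ (hwpT c hc u hu))).2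
  have htripleK : ∀ n, 1 ≤ n → (φ (w n) ∈ K ∨ φ (v (n + 1)) ∈ K) →
      φ (w n) * φ (v (n + 1)) * φ (w n) ∈ K := by
    intro n hn h
    have hwU : φ (w n) ∈ U := hTU _ (hwT n hn)
    have hvU : φ (v (n + 1)) ∈ U := hTU _ (hvmem _ (by omega))
    rcases h with h | h
    · exact (hKabs _ (hKabs _ h _ hvU).2 _ hwU).2
    · exact (hKabs _ (hKabs _ h _ hwU).1 _ hwU).2
  have hwK : ∀ n, i ≤ n → φ (w n) ∈ K := by
    intro n hin
    induction n, hin using Nat.le_induction with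
    | base =>
      rcases Nat.lt_or_ge i 2 with h2 | h2
      · have hie : i = 1 := by omega
        subst hie
        rw [hw1]; exact hvK
      · obtain ⟨p, rfl⟩ : ∃ p, i = p + 1 := ⟨i - 1, by omega⟩
        have hp : 1 ≤ p := by omega
        rw [hwsucc p hp]
        exact hKpow _ (htripleT p hp)
          (by rw [htriple p hp]; exact htripleK p hp (Or.inr hvK)) _ (Nat.factorial_pos _)
    | succ n hn ih =>
      have h1n : 1 ≤ n := le_trans hi1 hn
      rw [hwsucc n h1n]
      exact hKpow _ (htripleT n h1n)
        (by rw [htriple n h1n]; exact htripleK n h1n (Or.inl ih)) _ (Nat.factorial_pos _)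
  have h1N : 1 ≤ N := le_trans hi1 hiN
  have hEK : φ (w N) ∈ K := hwK N hiN
  have hEU : φ (w N) ∈ U := hTU _ (hwT N h1N)
  -- idempotency of E = φ (w N)
  have hEidem : φ (w N) * φ (w N) = φ (w N) := by
    by_cases hk1 : k = 1
    · have hsub := Fintype.card_le_one_iff.mp (by omega : Fintype.card S ≤ 1)
      exact hsub _ _
    · have hN2 : 2 ≤ N := by omega
      have hNe : N - 1 + 1 = N := by omega
      have hcoe := hstep (N - 1) (by omega)
      rw [hNe] at hcoe
      obtain ⟨i', j', hi'1, hij, hj'le, hcol⟩ :=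
        ZiminAux.exists_pow_collision (S := S) (φ (w (N - 1)) * φ (v N) * φ (w (N - 1)))
      have hcol' : ((φ (w (N - 1)) * φ (v N) * φ (w (N - 1)) : S) : WithOne S) ^ i'
          = ((φ (w (N - 1)) * φ (v N) * φ (w (N - 1)) : S) : WithOne S) ^ (i' + (j' - i')) := by
        rw [show i' + (j' - i') = j' from by omega]; exact hcol
      obtain ⟨q, hq⟩ : (j' - i') ∣ Nat.factorial N :=
        Nat.dvd_factorial (by omega) (by omega)
      have hle : i' ≤ Nat.factorial N :=
        le_trans (by omega : i' ≤ N) (Nat.self_le_factorial N)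
      have hfinal : ((φ (w N) * φ (w N) : S) : WithOne S) = ((φ (w N) : S) : WithOne S) := by
        rw [WithOne.coe_mul, hcoe, ← pow_add,
          show Nat.factorial N + Nat.factorial N
              = Nat.factorial N + q * (j' - i') from by rw [hq]; ring,
          ZiminAux.pow_period hcol' q _ hle]
      exact WithOne.coe_inj.mp hfinal
  -- the local group G = E K E
  have hGsubK : ∀ z ∈ K, φ (w N) * z * φ (w N) ∈ K := fun z hz =>
    (hKabs _ (hKabs _ hz _ hEU).1 _ hEU).2
  set G : Set S := (fun z => φ (w N) * z * φ (w N)) '' K with hGdef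
  have hGK : G ⊆ K := by rintro g ⟨z, hz, rfl⟩; exact hGsubK z hz
  have hGid : ∀ g ∈ G, φ (w N) * g = g ∧ g * φ (w N) = g := by
    rintro g ⟨z, hz, rfl⟩
    constructor
    · show φ (w N) * (φ (w N) * z * φ (w N)) = φ (w N) * z * φ (w N)
      rw [← mul_assoc, ← mul_assoc, hEidem]
    · show (φ (w N) * z * φ (w N)) * φ (w N) = φ (w N) * z * φ (w N)
      rw [mul_assoc (φ (w N) * z), hEidem]
  have hEG : φ (w N) ∈ G := ⟨φ (w N), hEK, by
    show φ (w N) * φ (w N) * φ (w N) = φ (w N)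
    rw [hEidem, hEidem]⟩
  have hGmul : ∀ a ∈ G, ∀ b ∈ G, a * b ∈ G := by
    rintro a ⟨z, hz, rfl⟩ b ⟨z', hz', rfl⟩
    refine ⟨z * φ (w N) * z', (hKabs _ (hKabs _ hz _ hEU).2 _ (hKU hz')).2, ?_⟩
    show φ (w N) * (z * φ (w N) * z') * φ (w N)
        = (φ (w N) * z * φ (w N)) * (φ (w N) * z' * φ (w N))
    simp only [← mul_assoc]
    rw [mul_assoc (φ (w N) * z) (φ (w N)) (φ (w N)), hEidem]
  -- every element of G is invertible with identity E
  have hinv : ∀ g ∈ G, ∃ h ∈ G, g * h = φ (w N) ∧ h * g = φ (w N) := by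
    intro g hg
    obtain ⟨a, ha, b, hb, hab⟩ := ZiminAux.mem_sandwich hK hKmin (hGK hg) hEK
    have hEg : φ (w N) * g = g := (hGid g hg).1
    have hgE : g * φ (w N) = g := (hGid g hg).2
    have huG : φ (w N) * a * φ (w N) ∈ G := ⟨a, ha, rfl⟩
    have hv'G : φ (w N) * b * φ (w N) ∈ G := ⟨b, hb, rfl⟩
    have hugv : (φ (w N) * a * φ (w N)) * g * (φ (w N) * b * φ (w N)) = φ (w N) := by
      have h1 : ∀ z, φ (w N) * (g * z) = g * z := fun z => by rw [← mul_assoc, hEg]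
      have h2 : ∀ z, g * (φ (w N) * z) = g * z := fun z => by rw [← mul_assoc, hgE]
      have h3 : a * (g * (b * φ (w N))) = φ (w N) * φ (w N) := by
        simp only [← mul_assoc]; rw [hab]
      simp only [mul_assoc]
      rw [h2, h1, h3, ← mul_assoc, hEidem, hEidem]
    have hvug : ((φ (w N) * b * φ (w N)) * (φ (w N) * a * φ (w N))) * g = φ (w N) := by
      have hf := ZiminAux.flip_inv hGid hGmul hEG
        (hGmul _ huG g hg) hv'G hugv
      rw [← mul_assoc] at hf
      exact hf
    have hgvu : g * ((φ (w N) * b * φ (w N)) * (φ (w N) * a * φ (w N))) = φ (w N) := by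
      have h4 : (φ (w N) * a * φ (w N)) * (g * (φ (w N) * b * φ (w N))) = φ (w N) := by
        rw [← mul_assoc]; exact hugv
      have hf := ZiminAux.flip_inv hGid hGmul hEG huG (hGmul g hg _ hv'G) h4
      rw [mul_assoc] at hf
      exact hf
    exact ⟨_, hGmul _ hv'G _ huG, hgvu, hvug⟩
  -- orders of elements of G divide into factorials
  have horder : ∀ g ∈ G, ∃ d, 1 ≤ d ∧ d ≤ k ∧
      ((g : S) : WithOne S) ^ d = ((φ (w N) : S) : WithOne S) := by
    intro g hg
    obtain ⟨h, hhG, hgh, hhg⟩ := hinv g hg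
    obtain ⟨i', j', hi'1, hij, hj'le, hcol⟩ := ZiminAux.exists_pow_collision (S := S) g
    have hpowinv : ∀ c, 1 ≤ c →
        ((h : S) : WithOne S) ^ c * ((g : S) : WithOne S) ^ c
          = ((φ (w N) : S) : WithOne S) := by
      intro c hc
      induction c, hc using Nat.le_induction with
      | base => rw [pow_one, pow_one, ← WithOne.coe_mul, hhg]
      | succ c hc ih =>
        rw [pow_succ', pow_succ, mul_assoc, ← mul_assoc (((h : S) : WithOne S) ^ c), ih,
          ← WithOne.coe_mul, (hGid g hg).1, ← WithOne.coe_mul, hhg]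
    refine ⟨j' - i', by omega, by omega, ?_⟩
    have h6 : ((g : S) : WithOne S) ^ i' * ((g : S) : WithOne S) ^ (j' - i')
        = ((g : S) : WithOne S) ^ j' := by
      rw [← pow_add]; congr 1; omega
    have h7 : ((φ (w N) : S) : WithOne S) * ((g : S) : WithOne S) ^ (j' - i')
        = ((φ (w N) : S) : WithOne S) := by
      calc ((φ (w N) : S) : WithOne S) * ((g : S) : WithOne S) ^ (j' - i')
          = (((h : S) : WithOne S) ^ i' * ((g : S) : WithOne S) ^ i')
              * ((g : S) : WithOne S) ^ (j' - i') := by rw [hpowinv i' hi'1]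
        _ = ((h : S) : WithOne S) ^ i'
              * (((g : S) : WithOne S) ^ i' * ((g : S) : WithOne S) ^ (j' - i')) := by
            rw [mul_assoc]
        _ = ((h : S) : WithOne S) ^ i' * ((g : S) : WithOne S) ^ j' := by rw [h6]
        _ = ((h : S) : WithOne S) ^ i' * ((g : S) : WithOne S) ^ i' := by rw [hcol]
        _ = ((φ (w N) : S) : WithOne S) := hpowinv i' hi'1
    obtain ⟨z, hzG, hzeq⟩ := ZiminAux.coe_pow_mem G hGmul hg (j' - i') (by omega)
    rw [hzeq] at h7 ⊢
    rw [← WithOne.coe_mul, (hGid z hzG).1] at h7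
    exact h7
  -- stabilization
  have hstab : ∀ n, N ≤ n → φ (w n) = φ (w N) := by
    intro n hn
    induction n, hn using Nat.le_induction with
    | base => rfl
    | succ n hn ih =>
      have h1n : 1 ≤ n := le_trans h1N hn
      have hx : φ (w n) * φ (v (n + 1)) * φ (w n) ∈ G := by
        rw [ih]
        refine ⟨φ (v (n + 1)) * φ (w N),
          (hKabs _ hEK _ (hTU _ (hvmem _ (by omega)))).1, ?_⟩
        show φ (w N) * (φ (v (n + 1)) * φ (w N)) * φ (w N)
            = φ (w N) * φ (v (n + 1)) * φ (w N)
        rw [← mul_assoc, mul_assoc (φ (w N) * φ (v (n + 1))), hEidem]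
      obtain ⟨d, hd1, hdk, hdeq⟩ := horder _ hx
      obtain ⟨q, hq⟩ : d ∣ Nat.factorial (n + 1) := Nat.dvd_factorial (by omega) (by omega)
      have hq1 : 1 ≤ q := by
        rcases Nat.eq_zero_or_pos q with rfl | hpos
        · rw [Nat.mul_zero] at hq
          exact absurd hq (Nat.factorial_pos _).ne'
        · exact hpos
      have hfinal : ((φ (w (n + 1)) : S) : WithOne S) = ((φ (w N) : S) : WithOne S) := by
        calc ((φ (w (n + 1)) : S) : WithOne S)
            = ((φ (w n) * φ (v (n + 1)) * φ (w n) : S) : WithOne S)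
                ^ (Nat.factorial (n + 1)) := hstep n h1n
          _ = ((φ (w N) : S) : WithOne S) := by
              rw [hq, pow_mul, hdeq, ZiminAux.coe_pow_idem hEidem q hq1]
      exact WithOne.coe_inj.mp hfinal
  exact ⟨hstab, hEidem, K, hK, hKmin, hEK⟩
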